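/- If for every increasing event E and F one has P(E ∩ F) ≥ P(E)·P(F), then for any increasing events A₁,…,A_N one has max{P(A_n) : 1 ≤ n ≤ N} ≥ 1 − (1 − P(A₁ ∪ ⋯ ∪ A_N))^{1/N}. -/

import Mathlib

open MeasureTheory

/-- An event in `{0,1}^E` is increasing if it is stable under turning coordinates
from `0` to `1` (i.e. it is upward closed for the pointwise order). -/
def IncreasingEvent {E : Type*} (A : Set (E → Bool)) : Prop :=
  ∀ ω ω' : E → Bool, ω ≤ ω' → ω ∈ A → ω' ∈ A

lemma compl_toReal {E : Type*} (μ : Measure (E → Bool)) [IsProbabilityMeasure μ]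
    {S : Set (E → Bool)} (hS : MeasurableSet S) :
    (μ Sᶜ).toReal = 1 - (μ S).toReal := by
  rw [prob_compl_eq_one_sub hS, ENNReal.toReal_sub_of_le prob_le_one ENNReal.one_ne_top,
    ENNReal.toReal_one]

/-- FKG for increasing events implies FKG for their complements (decreasing events). -/
lemma fkg_compl {E : Type*} (μ : Measure (E → Bool)) [IsProbabilityMeasure μ]
    (hFKG : ∀ A B : Set (E → Bool), MeasurableSet A → MeasurableSet B →
      IncreasingEvent A → IncreasingEvent B →
      (μ A).toReal * (μ B).toReal ≤ (μ (A ∩ B)).toReal)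
    {A B : Set (E → Bool)} (hA : MeasurableSet A) (hB : MeasurableSet B)
    (hiA : IncreasingEvent A) (hiB : IncreasingEvent B) :
    (1 - (μ A).toReal) * (1 - (μ B).toReal) ≤ (μ (A ∪ B)ᶜ).toReal := by
  have hie : μ (A ∪ B) + μ (A ∩ B) = μ A + μ B := measure_union_add_inter A hB
  have h1 : (μ (A ∪ B)).toReal + (μ (A ∩ B)).toReal = (μ A).toReal + (μ B).toReal := by
    rw [← ENNReal.toReal_add (measure_ne_top _ _) (measure_ne_top _ _),
      ← ENNReal.toReal_add (measure_ne_top _ _) (measure_ne_top _ _), hie]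
  have h2 := hFKG A B hA hB hiA hiB
  rw [compl_toReal μ (hA.union hB)]
  nlinarith

lemma key_prod {E : Type*} (μ : Measure (E → Bool)) [IsProbabilityMeasure μ]
    (hFKG : ∀ A B : Set (E → Bool), MeasurableSet A → MeasurableSet B →
      IncreasingEvent A → IncreasingEvent B →
      (μ A).toReal * (μ B).toReal ≤ (μ (A ∩ B)).toReal)
    {N : ℕ} (A : Fin N → Set (E → Bool))
    (hmeas : ∀ i, MeasurableSet (A i)) (hinc : ∀ i, IncreasingEvent (A i))
    (s : Finset (Fin N)) :
    ∏ i ∈ s, (1 - (μ (A i)).toReal) ≤ (μ (⋃ i ∈ s, A i)ᶜ).toReal := by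
  classical
  induction s using Finset.induction_on with
  | empty => simp
  | @insert a s ha ih =>
    have hUm : MeasurableSet (⋃ i ∈ s, A i) := s.measurableSet_biUnion (fun i _ => hmeas i)
    have hUi : IncreasingEvent (⋃ i ∈ s, A i) := by
      intro ω ω' hle hmem
      obtain ⟨i, his, hi⟩ := Set.mem_iUnion₂.1 hmem
      exact Set.mem_iUnion₂.2 ⟨i, his, hinc i ω ω' hle hi⟩
    have h1 : (1 - (μ (A a)).toReal) * (1 - (μ (⋃ i ∈ s, A i)).toReal)
        ≤ (μ (A a ∪ ⋃ i ∈ s, A i)ᶜ).toReal :=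
      fkg_compl μ hFKG (hmeas a) hUm (hinc a) hUi
    rw [Finset.prod_insert ha, Finset.set_biUnion_insert]
    have h0 : (0:ℝ) ≤ 1 - (μ (A a)).toReal := by
      have := prob_le_one (μ := μ) (s := A a)
      have : (μ (A a)).toReal ≤ 1 := by
        simpa using ENNReal.toReal_mono ENNReal.one_ne_top this
      linarith
    calc (1 - (μ (A a)).toReal) * ∏ i ∈ s, (1 - (μ (A i)).toReal)
        ≤ (1 - (μ (A a)).toReal) * (μ (⋃ i ∈ s, A i)ᶜ).toReal :=
          mul_le_mul_of_nonneg_left ih h0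
      _ = (1 - (μ (A a)).toReal) * (1 - (μ (⋃ i ∈ s, A i)).toReal) := by
          rw [compl_toReal μ hUm]
      _ ≤ _ := h1

/-- square-root trick. If a probability measure on `{0,1}^E`
satisfies the FKG inequality for increasing events, then for increasing events
`A 1, …, A N`, `max P(A i) ≥ 1 - (1 - P(A 1 ∪ ⋯ ∪ A N))^(1/N)`. -/
theorem square_root_trick {E : Type*} [Countable E]
    (μ : Measure (E → Bool)) [IsProbabilityMeasure μ]
    (hFKG : ∀ A B : Set (E → Bool), MeasurableSet A → MeasurableSet B →
      IncreasingEvent A → IncreasingEvent B →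
      (μ A).toReal * (μ B).toReal ≤ (μ (A ∩ B)).toReal)
    (N : ℕ) (hN : 1 ≤ N) (A : Fin N → Set (E → Bool))
    (hmeas : ∀ i, MeasurableSet (A i)) (hinc : ∀ i, IncreasingEvent (A i)) :
    ∃ i : Fin N,
      1 - (1 - (μ (⋃ i, A i)).toReal) ^ ((1 : ℝ) / N) ≤ (μ (A i)).toReal := by
  classical
  have hNe : (Finset.univ : Finset (Fin N)).Nonempty := ⟨⟨0, hN⟩, Finset.mem_univ _⟩
  obtain ⟨j, -, hj⟩ := Finset.exists_max_image Finset.univ (fun i => (μ (A i)).toReal) hNe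
  refine ⟨j, ?_⟩
  set m : ℝ := (μ (⋃ i, A i)).toReal with hm
  set x : ℝ := (μ (A j)).toReal with hx
  have hprob_le_one : ∀ S : Set (E → Bool), (μ S).toReal ≤ 1 := fun S => by
    simpa using ENNReal.toReal_mono ENNReal.one_ne_top (prob_le_one (μ := μ) (s := S))
  have hm1 : m ≤ 1 := hprob_le_one _
  have hx1 : x ≤ 1 := hprob_le_one _
  rw [sub_le_iff_le_add, ← sub_le_iff_le_add']
  -- goal : 1 - x ≤ (1 - m) ^ (1/N)
  have hmnn : (0:ℝ) ≤ 1 - m := by linarith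
  have hxnn : (0:ℝ) ≤ 1 - x := by linarith
  have hkey : (1 - x) ^ N ≤ 1 - m := by
    have h1 : ∏ i : Fin N, (1 - (μ (A i)).toReal) ≤ (μ (⋃ i, A i)ᶜ).toReal := by
      have := key_prod μ hFKG A hmeas hinc Finset.univ
      simpa using this
    have h2 : (1 - x) ^ N ≤ ∏ i : Fin N, (1 - (μ (A i)).toReal) := by
      have := Finset.prod_le_prod (s := (Finset.univ : Finset (Fin N)))
        (f := fun _ => 1 - x) (g := fun i => 1 - (μ (A i)).toReal)
        (fun i _ => hxnn) (fun i _ => by have := hj i (Finset.mem_univ i); show 1 - x ≤ 1 - (μ (A i)).toReal; linarith)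
      simpa [Finset.prod_const, Finset.card_univ] using this
    have h3 : (μ (⋃ i, A i)ᶜ).toReal = 1 - m := by
      rw [compl_toReal μ (MeasurableSet.iUnion (fun i => hmeas i))]
    linarith
  have hNne : (N:ℝ) ≠ 0 := Nat.cast_ne_zero.2 (by omega)
  calc 1 - x = ((1 - x) ^ N) ^ ((1:ℝ)/N) := by
        rw [← Real.rpow_natCast (1-x) N, ← Real.rpow_mul hxnn]
        rw [mul_one_div, div_self hNne, Real.rpow_one]
    _ ≤ (1 - m) ^ ((1:ℝ)/N) :=
        Real.rpow_le_rpow (pow_nonneg hxnn N) hkey (by positivity)
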